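/- For every integer N ≥ 2 there exist m = 2^{2(N−1)} matrices U₁, …, U_m of size 2^N × 2^N, each of which is an N-fold Kronecker product V₁ ⊗ V₂ ⊗ … ⊗ V_N of unitary 2×2 complex matrices, such that for every 2^N × 2^N complex matrix ρ one has (1/m)·Σᵢ Uᵢ ρ Uᵢ† = 2^{−N}(Tr(ρ)·I + Σ_{j=1}^{3} Tr(ρ σ_j^{⊗N}) σ_j^{⊗N}). In particular, every N-qubit density matrix ρ is mapped by this mixture of local unitaries to the M³_N state ϖ(c₁,c₂,c₃) with c_j = Tr(ρ σ_j^{⊗N}). -/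

import Mathlib

open Matrix BigOperators Polynomial
open scoped ComplexOrder

/-- The three Pauli matrices. -/
noncomputable def pauli : Fin 3 → Matrix (Fin 2) (Fin 2) ℂ :=
  ![!![0, 1; 1, 0], !![0, -Complex.I; Complex.I, 0], !![1, 0; 0, -1]]

/-- The `N`-fold Kronecker power of a 2×2 matrix, with rows and columns indexed by
`Fin N → Fin 2` (the `N`-qubit computational basis). -/
noncomputable def kronPow (A : Matrix (Fin 2) (Fin 2) ℂ) (N : ℕ) :
    Matrix (Fin N → Fin 2) (Fin N → Fin 2) ℂ :=
  Matrix.of fun i j => ∏ k, A (i k) (j k)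

/-- The `M³_N` state `ϖ(c) = 2^{-N} (I + c₁ σ₁^{⊗N} + c₂ σ₂^{⊗N} + c₃ σ₃^{⊗N})`. -/
noncomputable def Mstate (N : ℕ) (c : Fin 3 → ℝ) :
    Matrix (Fin N → Fin 2) (Fin N → Fin 2) ℂ :=
  ((2 : ℂ) ^ N)⁻¹ • (1 + ∑ j : Fin 3, (c j : ℂ) • kronPow (pauli j) N)


/-- A Kronecker product `V₁ ⊗ V₂ ⊗ … ⊗ V_N` of `N` matrices of size 2×2, with rows and
columns indexed by `Fin N → Fin 2`. -/
noncomputable def localProd {N : ℕ} (V : Fin N → Matrix (Fin 2) (Fin 2) ℂ) :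
    Matrix (Fin N → Fin 2) (Fin N → Fin 2) ℂ :=
  Matrix.of fun i j => ∏ k, V k (i k) (j k)

namespace Stmt4Aux

noncomputable def sig : Fin 4 → Matrix (Fin 2) (Fin 2) ℂ :=
  ![!![1, 0; 0, 1], pauli 0, pauli 1, pauli 2]

def phi : Fin 4 → ZMod 2 × ZMod 2 := ![(0,0),(1,0),(1,1),(0,1)]

def psi : ZMod 2 × ZMod 2 → Fin 4 := fun s =>
  if s = (0,0) then 0 else if s = (1,0) then 1 else if s = (1,1) then 2 else 3

lemma psi_phi (x : Fin 4) : psi (phi x) = x := by revert x; decide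

lemma phi_psi (s : ZMod 2 × ZMod 2) : phi (psi s) = s := by revert s; decide

noncomputable def sgn : ZMod 2 → ℂ := fun z => if z = 0 then 1 else -1

def symp : ZMod 2 × ZMod 2 → ZMod 2 × ZMod 2 → ZMod 2 :=
  fun a b => a.1 * b.2 + a.2 * b.1

lemma two_zmod : (1 + 1 : ZMod 2) = 0 := by decide

lemma sgn_add (x y : ZMod 2) : sgn (x + y) = sgn x * sgn y := by
  have hx : x = 0 ∨ x = 1 := by revert x; decide
  have hy : y = 0 ∨ y = 1 := by revert y; decide
  rcases hx with rfl | rfl <;> rcases hy with rfl | rfl <;>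
    simp only [sgn, two_zmod] <;> norm_num

lemma symp_add (x y w : ZMod 2 × ZMod 2) :
    symp (x + y) w = symp x w + symp y w := by
  simp [symp]; ring

lemma sgn_symp_sum {ι : Type*} (s : Finset ι) (v : ι → ZMod 2 × ZMod 2)
    (w : ZMod 2 × ZMod 2) :
    sgn (symp (∑ k ∈ s, v k) w) = ∏ k ∈ s, sgn (symp (v k) w) := by
  classical
  induction s using Finset.induction with
  | empty => simp [symp, sgn]
  | insert a s h ih =>
      rw [Finset.sum_insert h, Finset.prod_insert h, symp_add, sgn_add, ih]

lemma sig_conj (x : Fin 4) (i j : Fin 2) :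
    (starRingEnd ℂ) (sig x i j) = sig x j i := by
  fin_cases x <;> fin_cases i <;> fin_cases j <;> simp [sig, pauli]

lemma sig_unitary (x : Fin 4) : sig x ∈ Matrix.unitaryGroup (Fin 2) ℂ := by
  rw [Matrix.mem_unitaryGroup_iff]
  fin_cases x <;> ext i j <;> fin_cases i <;> fin_cases j <;>
    simp [sig, pauli, Matrix.mul_apply, Fin.sum_univ_two, Matrix.one_apply,
      Matrix.star_apply, Complex.ext_iff]

lemma char4 (s : ZMod 2 × ZMod 2) :
    ∑ t : Fin 4, sgn (symp s (phi t)) = if s = 0 then 4 else 0 := by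
  have : s = (0,0) ∨ s = (1,0) ∨ s = (0,1) ∨ s = (1,1) := by revert s; decide
  rcases this with rfl | rfl | rfl | rfl <;>
    norm_num [Fin.sum_univ_four, sgn, symp, phi, Prod.ext_iff, two_zmod, Matrix.cons_val_two, Matrix.cons_val_three]

set_option maxHeartbeats 1000000 in
lemma key1 (t : Fin 4) (i j j' l : Fin 2) :
    ∑ x : Fin 4, sgn (symp (phi x) (phi t)) * (sig x i j * sig x j' l) =
      2 * (sig t i l * sig t j' j) := by
  have ht : t = 0 ∨ t = 1 ∨ t = 2 ∨ t = 3 := by revert t; decide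
  rcases ht with rfl | rfl | rfl | rfl <;>
  · fin_cases i <;> fin_cases j <;> fin_cases j' <;> fin_cases l <;>
      norm_num [Fin.sum_univ_four, sgn, symp, phi, sig, pauli, two_zmod, Matrix.cons_val_two, Matrix.cons_val_three]

/-- The local Pauli string. -/
noncomputable def P {M : ℕ} (b : Fin M → Fin 4) :
    Matrix (Fin M → Fin 2) (Fin M → Fin 2) ℂ :=
  localProd (fun k => sig (b k))

lemma sig_entry_zero (a b : Fin 2) : sig 0 a b = if a = b then 1 else 0 := by
  fin_cases a <;> fin_cases b <;> simp [sig]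

lemma kron_sig_zero (M : ℕ) : kronPow (sig 0) M = 1 := by
  ext i j
  simp only [kronPow, Matrix.of_apply, sig_entry_zero, Matrix.one_apply]
  rw [Finset.prod_boole]
  simp [funext_iff]

lemma sig_succ (j : Fin 3) : sig j.succ = pauli j := by
  fin_cases j <;> rfl

lemma kron_herm (M : ℕ) (t : Fin 4) :
    (kronPow (sig t) M)ᴴ = kronPow (sig t) M := by
  ext i j
  simp only [Matrix.conjTranspose_apply, kronPow, Matrix.of_apply]
  rw [show (star (∏ k, sig t (j k) (i k)) : ℂ)
      = (starRingEnd ℂ) (∏ k, sig t (j k) (i k)) from rfl, map_prod]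
  simp only [sig_conj]

/-- The core single-`t` computation. -/
lemma inner_sum (M : ℕ) (t : Fin 4) (ρ : Matrix (Fin M → Fin 2) (Fin M → Fin 2) ℂ) :
    ∑ a : Fin M → Fin 4, sgn (symp (∑ k, phi (a k)) (phi t)) • (P a * ρ * (P a)ᴴ)
      = ((2:ℂ)^M * (ρ * kronPow (sig t) M).trace) • kronPow (sig t) M := by
  ext i l
  have hP : ∀ (a : Fin M → Fin 4) (u v : Fin M → Fin 2),
      P a u v = ∏ k, sig (a k) (u k) (v k) := fun _ _ _ => rfl
  have hA : ∀ a : Fin M → Fin 4, (P a * ρ * (P a)ᴴ) i l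
      = ∑ j' : Fin M → Fin 2, ∑ j : Fin M → Fin 2,
          ρ j j' * ((∏ k, sig (a k) (i k) (j k)) * ∏ k, sig (a k) (j' k) (l k)) := by
    intro a
    rw [Matrix.mul_apply]
    refine Finset.sum_congr rfl fun j' _ => ?_
    rw [Matrix.mul_apply, Finset.sum_mul]
    refine Finset.sum_congr rfl fun j _ => ?_
    rw [Matrix.conjTranspose_apply, hP, hP]
    rw [show (star (∏ k, sig (a k) (l k) (j' k)) : ℂ)
        = (starRingEnd ℂ) (∏ k, sig (a k) (l k) (j' k)) from rfl, map_prod]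
    simp only [sig_conj]
    ring
  simp only [Matrix.sum_apply, Matrix.smul_apply, smul_eq_mul]
  have step1 : ∀ a : Fin M → Fin 4,
      sgn (symp (∑ k, phi (a k)) (phi t)) * (P a * ρ * (P a)ᴴ) i l
      = ∑ j' : Fin M → Fin 2, ∑ j : Fin M → Fin 2,
          ρ j j' * ∏ k, (sgn (symp (phi (a k)) (phi t)) *
            (sig (a k) (i k) (j k) * sig (a k) (j' k) (l k))) := by
    intro a
    rw [hA, Finset.mul_sum]
    refine Finset.sum_congr rfl fun j' _ => ?_
    rw [Finset.mul_sum]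
    refine Finset.sum_congr rfl fun j _ => ?_
    rw [sgn_symp_sum, Finset.prod_mul_distrib, Finset.prod_mul_distrib]
    ring
  calc
    ∑ a : Fin M → Fin 4, sgn (symp (∑ k, phi (a k)) (phi t)) * (P a * ρ * (P a)ᴴ) i l
        = ∑ a : Fin M → Fin 4, ∑ j' : Fin M → Fin 2, ∑ j : Fin M → Fin 2,
            ρ j j' * ∏ k, (sgn (symp (phi (a k)) (phi t)) *
              (sig (a k) (i k) (j k) * sig (a k) (j' k) (l k))) :=
      Finset.sum_congr rfl fun a _ => step1 a
    _ = ∑ j' : Fin M → Fin 2, ∑ j : Fin M → Fin 2, ∑ a : Fin M → Fin 4,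
            ρ j j' * ∏ k, (sgn (symp (phi (a k)) (phi t)) *
              (sig (a k) (i k) (j k) * sig (a k) (j' k) (l k))) := by
      rw [Finset.sum_comm]
      exact Finset.sum_congr rfl fun j' _ => Finset.sum_comm
    _ = ∑ j' : Fin M → Fin 2, ∑ j : Fin M → Fin 2,
            ρ j j' * ((2:ℂ)^M * ((∏ k, sig t (i k) (l k)) * ∏ k, sig t (j' k) (j k))) := by
      refine Finset.sum_congr rfl fun j' _ => Finset.sum_congr rfl fun j _ => ?_
      rw [← Finset.mul_sum]
      congr 1
      rw [← Fintype.prod_sum (f := fun k x => sgn (symp (phi x) (phi t)) *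
        (sig x (i k) (j k) * sig x (j' k) (l k)))]
      simp only [key1]
      simp only [Finset.prod_mul_distrib, Finset.prod_const, Finset.card_univ,
        Fintype.card_fin]
    _ = ((2:ℂ)^M * (ρ * kronPow (sig t) M).trace) • kronPow (sig t) M i l := by
      rw [Matrix.trace]
      simp only [Matrix.diag_apply, Matrix.mul_apply, kronPow, Matrix.of_apply,
        smul_eq_mul]
      rw [Finset.sum_comm]
      simp only [Finset.mul_sum, Finset.sum_mul]
      refine Finset.sum_congr rfl fun j _ => Finset.sum_congr rfl fun j' _ => ?_
      ring

/-- extension of a Pauli string by the unique balancing last entry -/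
noncomputable def extend {n : ℕ} (a : Fin n → Fin 4) : Fin (n+1) → Fin 4 :=
  Fin.snoc a (psi (∑ k, phi (a k)))

lemma add_self_zmod (s : ZMod 2 × ZMod 2) : s + s = 0 := by revert s; decide

lemma sum_phi_extend {n : ℕ} (a : Fin n → Fin 4) :
    ∑ k, phi (extend a k) = 0 := by
  rw [Fin.sum_univ_castSucc]
  simp only [extend, Fin.snoc_castSucc, Fin.snoc_last, phi_psi]
  exact add_self_zmod _

lemma sum_extend {β : Type*} [AddCommMonoid β] {n : ℕ}
    (F : (Fin (n+1) → Fin 4) → β) :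
    ∑ a : Fin n → Fin 4, F (extend a) =
      ∑ a : Fin (n+1) → Fin 4, if (∑ k, phi (a k)) = 0 then F a else 0 := by
  classical
  rw [← Finset.sum_filter]
  refine Finset.sum_nbij' (i := extend) (j := fun a => Fin.init a) ?_ ?_ ?_ ?_ ?_
  · intro a _
    simp [Finset.mem_filter, sum_phi_extend a]
  · intro a _
    exact Finset.mem_univ _
  · intro a _
    simp [extend, Fin.init_snoc]
  · intro a ha
    have hcond : ∑ k, phi (a k) = 0 := by
      simpa using (Finset.mem_filter.mp ha).2
    have hsplit : (∑ k : Fin n, phi (Fin.init a k)) + phi (a (Fin.last n)) = 0 := by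
      rw [Fin.sum_univ_castSucc] at hcond
      simpa [Fin.init] using hcond
    have heq : ∑ k : Fin n, phi (Fin.init a k) = phi (a (Fin.last n)) := by
      have := add_self_zmod (phi (a (Fin.last n)))
      have h2 : (∑ k : Fin n, phi (Fin.init a k)) + phi (a (Fin.last n))
          = phi (a (Fin.last n)) + phi (a (Fin.last n)) := by rw [hsplit, this]
      exact add_right_cancel h2
    show Fin.snoc (Fin.init a) (psi (∑ k, phi (Fin.init a k))) = a
    rw [heq, psi_phi, Fin.snoc_init_self]
  · intro a _
    rfl

end Stmt4Aux

open Stmt4Aux in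
theorem stmt4 (N : ℕ) (hN : 2 ≤ N) :
    ∃ U : Fin (2^(2*(N-1))) → Matrix (Fin N → Fin 2) (Fin N → Fin 2) ℂ,
      (∀ m, ∃ V : Fin N → Matrix (Fin 2) (Fin 2) ℂ,
        (∀ k, V k ∈ Matrix.unitaryGroup (Fin 2) ℂ) ∧ U m = localProd V) ∧
      (∀ ρ : Matrix (Fin N → Fin 2) (Fin N → Fin 2) ℂ,
        ((2^(2*(N-1)) : ℂ))⁻¹ • ∑ m, U m * ρ * (U m)ᴴ =
          ((2 : ℂ)^N)⁻¹ • (ρ.trace • 1 +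
            ∑ j : Fin 3, (ρ * kronPow (pauli j) N).trace • kronPow (pauli j) N)) ∧
      (∀ ρ : Matrix (Fin N → Fin 2) (Fin N → Fin 2) ℂ, ρ.PosSemidef → ρ.trace = 1 →
        ((2^(2*(N-1)) : ℂ))⁻¹ • ∑ m, U m * ρ * (U m)ᴴ =
          Mstate N (fun j => ((ρ * kronPow (pauli j) N).trace).re)) := by
  obtain ⟨n, rfl⟩ : ∃ n, N = n + 1 := ⟨N - 1, (Nat.succ_pred_eq_of_pos (by omega)).symm⟩
  simp only [Nat.add_sub_cancel]
  have h42 : 2 ^ (2 * n) = 4 ^ n := by rw [pow_mul]; norm_num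
  let e : Fin (2 ^ (2 * n)) ≃ (Fin n → Fin 4) :=
    (finCongr h42).trans finFunctionFinEquiv.symm
  have hU2 : ∀ ρ : Matrix (Fin (n+1) → Fin 2) (Fin (n+1) → Fin 2) ℂ,
      ((2^(2*n) : ℂ))⁻¹ • ∑ m, P (extend (e m)) * ρ * (P (extend (e m)))ᴴ =
        ((2 : ℂ)^(n+1))⁻¹ • (ρ.trace • 1 +
          ∑ j : Fin 3, (ρ * kronPow (pauli j) (n+1)).trace • kronPow (pauli j) (n+1)) := by
    intro ρ
    have hmain : ∑ m : Fin (2^(2*n)), P (extend (e m)) * ρ * (P (extend (e m)))ᴴ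
        = ∑ a : Fin (n+1) → Fin 4, if (∑ k, phi (a k)) = 0
            then P a * ρ * (P a)ᴴ else 0 :=
      (Equiv.sum_comp e (fun a => P (extend a) * ρ * (P (extend a))ᴴ)).trans
        (sum_extend (fun a => P a * ρ * (P a)ᴴ))
    rw [hmain]
    have hchar : ∀ a : Fin (n+1) → Fin 4,
        (if (∑ k, phi (a k)) = 0 then P a * ρ * (P a)ᴴ else 0)
        = (4:ℂ)⁻¹ • ∑ t : Fin 4,
            sgn (symp (∑ k, phi (a k)) (phi t)) • (P a * ρ * (P a)ᴴ) := by
      intro a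
      rw [← Finset.sum_smul, char4]
      split
      · rw [smul_smul]; norm_num
      · simp
    simp only [hchar]
    rw [← Finset.smul_sum, Finset.sum_comm]
    simp only [Stmt4Aux.inner_sum]
    have hsplit : ∑ t : Fin 4,
        (ρ * kronPow (sig t) (n+1)).trace • kronPow (sig t) (n+1)
        = ρ.trace • 1 + ∑ j : Fin 3,
            (ρ * kronPow (pauli j) (n+1)).trace • kronPow (pauli j) (n+1) := by
      rw [Fin.sum_univ_succ]
      simp only [sig_succ, kron_sig_zero, Matrix.mul_one]
    rw [← hsplit]
    simp only [mul_smul]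
    rw [← Finset.smul_sum, smul_smul, smul_smul]
    congr 1
    have h2 : (2:ℂ) ≠ 0 := two_ne_zero
    have hne : ((2:ℂ)^(n+1)) ≠ 0 := pow_ne_zero _ h2
    have hexp : (2:ℂ)^(2*n) * (2:ℂ)^2 = (2:ℂ)^(n+1) * (2:ℂ)^(n+1) := by
      rw [← pow_add, ← pow_add]
      congr 1
      omega
    calc ((2:ℂ)^(2*n))⁻¹ * (4:ℂ)⁻¹ * (2:ℂ)^(n+1)
        = ((2:ℂ)^(2*n) * (2:ℂ)^2)⁻¹ * (2:ℂ)^(n+1) := by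
          rw [mul_inv]; norm_num
      _ = ((2:ℂ)^(n+1))⁻¹ * ((2:ℂ)^(n+1))⁻¹ * (2:ℂ)^(n+1) := by
          rw [hexp, mul_inv]
      _ = ((2:ℂ)^(n+1))⁻¹ := by
          rw [mul_assoc, inv_mul_cancel₀ hne, mul_one]
  refine ⟨fun m => P (extend (e m)), fun m =>
    ⟨fun k => sig (extend (e m) k), fun k => sig_unitary _, rfl⟩, hU2, ?_⟩
  intro ρ hpsd htr
  refine (hU2 ρ).trans ?_
  rw [Mstate]
  congr 1
  rw [htr, one_smul]
  congr 1
  refine Finset.sum_congr rfl fun j _ => ?_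
  congr 1
  have hKh : (kronPow (pauli j) (n+1))ᴴ = kronPow (pauli j) (n+1) := by
    rw [← sig_succ j]; exact kron_herm _ _
  have hc : (starRingEnd ℂ) ((ρ * kronPow (pauli j) (n+1)).trace)
      = (ρ * kronPow (pauli j) (n+1)).trace := by
    calc (starRingEnd ℂ) ((ρ * kronPow (pauli j) (n+1)).trace)
        = ((ρ * kronPow (pauli j) (n+1))ᴴ).trace := by
          rw [Matrix.trace_conjTranspose]; rfl
      _ = (kronPow (pauli j) (n+1) * ρ).trace := by
          rw [Matrix.conjTranspose_mul, hKh, hpsd.isHermitian]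
      _ = (ρ * kronPow (pauli j) (n+1)).trace := Matrix.trace_mul_comm _ _
  exact (Complex.conj_eq_iff_re.mp hc).symm
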